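/- Let X be closed in a metrizable space M, and Y closed and homotopy negligible in an absolute retract (absolute extensor) N. Then every continuous map f : X → Y extends to a continuous map f̄ : M → N with f̄⁻¹(Y) = X. -/

import Mathlib

universe u

/-- `N` is an absolute extensor for metrizable spaces: every continuous map from a
closed subset of a metrizable space into `N` extends continuously to the whole space. -/
def IsAbsoluteExtensor (N : Type u) [TopologicalSpace N] : Prop :=
  ∀ (Z : Type u) [MetricSpace Z] (A : Set Z), IsClosed A →
    ∀ f : A → N, Continuous f → ∃ g : Z → N, Continuous g ∧ ∀ a : A, g a = f a

/-- If `X` is closed in a metrizable space `M` and `Y` is closed and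
homotopy negligible in an absolute extensor `N`, then every continuous `f : X → Y`
extends to a continuous `f̄ : M → N` with `f̄⁻¹(Y) = X`. -/
theorem stmt6 {M N : Type u} [MetricSpace M] [MetricSpace N]
    (hN : IsAbsoluteExtensor N)
    (X : Set M) (hX : IsClosed X) (Y : Set N) (hY : IsClosed Y)
    (H : N × unitInterval → N) (hHc : Continuous H) (hH0 : ∀ n, H (n, 0) = n)
    (hHneg : ∀ n t, t ≠ 0 → H (n, t) ∉ Y)
    (f : X → Y) (hf : Continuous f) :
    ∃ g : M → N, Continuous g ∧ (∀ x : X, g x = f x) ∧ g ⁻¹' Y = X := by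
  obtain ⟨g₀, hg₀c, hg₀⟩ := hN M X hX (fun x => (f x : N))
    (continuous_subtype_val.comp hf)
  rcases X.eq_empty_or_nonempty with hXe | hXne
  · refine ⟨fun m => H (g₀ m, 1), hHc.comp (hg₀c.prodMk continuous_const), ?_, ?_⟩
    · rintro ⟨x, hx⟩; simp [hXe] at hx
    · rw [hXe]
      ext m
      simp only [Set.mem_preimage, Set.mem_empty_iff_false, iff_false]
      exact hHneg _ _ (by norm_num)
  · have h01 : ∀ m : M, min (Metric.infDist m X) 1 ∈ unitInterval := by
      intro m
      exact ⟨le_min (Metric.infDist_nonneg) zero_le_one, min_le_right _ _⟩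
    set τ : M → unitInterval := fun m => ⟨min (Metric.infDist m X) 1, h01 m⟩ with hτ
    have hτc : Continuous τ := by
      apply Continuous.subtype_mk
      exact (Metric.continuous_infDist_pt X).min continuous_const
    have hτ0 : ∀ m : M, τ m = 0 ↔ m ∈ X := by
      intro m
      constructor
      · intro h
        have h' : min (Metric.infDist m X) 1 = 0 := congrArg Subtype.val h
        have : Metric.infDist m X = 0 := by
          rcases min_eq_iff.mp h' with h1 | h1
          · exact h1.1
          · norm_num at h1
        exact (hX.mem_iff_infDist_zero hXne).mpr this
      · intro h
        have : Metric.infDist m X = 0 := Metric.infDist_zero_of_mem h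
        exact Subtype.ext (by show min (Metric.infDist m X) 1 = 0; simp [this])
    refine ⟨fun m => H (g₀ m, τ m), hHc.comp (hg₀c.prodMk hτc), ?_, ?_⟩
    · intro x
      show H (g₀ x, τ x) = f x
      rw [(hτ0 x).mpr x.2, hH0, hg₀]
    · ext m
      simp only [Set.mem_preimage]
      constructor
      · intro hm
        by_contra hmX
        exact hHneg _ _ (fun h => hmX ((hτ0 m).mp h)) hm
      · intro hm
        rw [(hτ0 m).mpr hm, hH0]
        have := hg₀ ⟨m, hm⟩
        simp only at this
        rw [this]
        exact (f ⟨m, hm⟩).2
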